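/- (Theorem 2, mean part: pPIC equals PIC.) For every block index m, the pPIC predictive mean equals the centralized PIC predictive mean: μ_{U_m} + (Φ_{U_m S}^m Σ̈_{SS}^{-1} ÿ_S − Σ_{U_m S} Σ_{SS}^{-1} ẏ_S^m) + ẏ_{U_m}^m = μ_{U_m} + Γ̃_{U_m D} (Γ_{DD} + Λ)^{-1} (y_D − μ_D), where Γ_{DD} + Λ is assumed invertible. -/

import Mathlib

open Matrix

lemma sigma_sum {M : ℕ} {D : Fin M → Type} [∀ m, Fintype (D m)]
    (f : ((m : Fin M) × D m) → ℝ) :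
    ∑ x : (m : Fin M) × D m, f x = ∑ k, ∑ d : D k, f ⟨k, d⟩ := by
  rw [← Finset.univ_sigma_univ, Finset.sum_sigma]

lemma sum_mulVec' {ι X Y : Type} [Fintype Y] (s : Finset ι) (A : ι → Matrix X Y ℝ)
    (w : Y → ℝ) : (∑ k ∈ s, A k) *ᵥ w = ∑ k ∈ s, A k *ᵥ w := by
  funext x
  simp only [Matrix.mulVec, dotProduct, Finset.sum_apply, Matrix.sum_apply,
    Finset.sum_mul]
  rw [Finset.sum_comm]

lemma blockrow_mulVec {M : ℕ} {D : Fin M → Type} [∀ m, Fintype (D m)]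
    {X : Type} [Fintype X]
    (B : ∀ k, Matrix X (D k) ℝ) (v : ((m : Fin M) × D m) → ℝ) :
    (Matrix.of fun x (d : (m : Fin M) × D m) => B d.1 x d.2) *ᵥ v
      = ∑ k, B k *ᵥ (fun d => v ⟨k, d⟩) := by
  funext x
  simp only [Matrix.mulVec, dotProduct, Finset.sum_apply, Matrix.of_apply]
  exact sigma_sum (fun y : (m : Fin M) × D m => B y.1 x y.2 * v y)

lemma blockdiag_mulVec {M : ℕ} {D : Fin M → Type} [∀ m, Fintype (D m)] [∀ m, DecidableEq (D m)]
    (Q : ∀ m, Matrix (D m) (D m) ℝ) (v : ((m : Fin M) × D m) → ℝ)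
    (k : Fin M) (d : D k) :
    (Matrix.blockDiagonal' Q *ᵥ v) ⟨k, d⟩ = (Q k *ᵥ (fun d' => v ⟨k, d'⟩)) d := by
  simp only [Matrix.mulVec, dotProduct]
  rw [sigma_sum (fun x : (m : Fin M) × D m => Matrix.blockDiagonal' Q ⟨k, d⟩ x * v x)]
  rw [Finset.sum_eq_single k]
  · simp
  · intro k' _ hk'
    apply Finset.sum_eq_zero
    intro d' _
    rw [Matrix.blockDiagonal'_apply_ne _ _ _ (Ne.symm hk'), zero_mul]
  · simp

theorem stmt_11
    {M : ℕ} (hM : 0 < M)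
    {S : Type} [Fintype S] [DecidableEq S]
    {D : Fin M → Type} [∀ m, Fintype (D m)] [∀ m, DecidableEq (D m)]
    (KSS : Matrix S S ℝ) (hKSSsym : KSSᵀ = KSS) (hKSSinv : IsUnit KSS.det)
    (KSD : ∀ m, Matrix S (D m) ℝ)
    (KDD : ∀ m, Matrix (D m) (D m) ℝ) (hKDDsym : ∀ m, (KDD m)ᵀ = KDD m)
    (Q : ∀ m, Matrix (D m) (D m) ℝ)
    (hQ : ∀ m, Q m = KDD m - (KSD m)ᵀ * KSS⁻¹ * KSD m)
    (hQinv : ∀ m, IsUnit (Q m).det)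
    (Λ : Matrix ((m : Fin M) × D m) ((m : Fin M) × D m) ℝ)
    (hΛ : Λ = Matrix.blockDiagonal' Q)
    (KSDf : Matrix S ((m : Fin M) × D m) ℝ)
    (hKSDf : KSDf = Matrix.of fun s d => KSD d.1 s d.2)
    (Kdd : Matrix S S ℝ)
    (hKdd : Kdd = KSS + ∑ m, KSD m * (Q m)⁻¹ * (KSD m)ᵀ)
    (hKddinv : IsUnit Kdd.det)
    (yD μD : ((m : Fin M) × D m) → ℝ)
    (cY : ∀ m, D m → ℝ) (hcY : ∀ m d, cY m d = yD ⟨m, d⟩ - μD ⟨m, d⟩)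
    (ydot : ∀ m, S → ℝ)
    (hydot : ∀ m, ydot m = KSD m *ᵥ ((Q m)⁻¹ *ᵥ cY m))
    (ydd : S → ℝ) (hydd : ydd = ∑ m, ydot m)
    {U : Fin M → Type} [∀ m, Fintype (U m)] [∀ m, DecidableEq (U m)]
    (KUS : ∀ m, Matrix (U m) S ℝ)
    (μU : ∀ m, U m → ℝ)
    (KUD : ∀ m, Matrix (U m) (D m) ℝ)
    (tΓ : ∀ m, Matrix (U m) ((k : Fin M) × D k) ℝ)
    (htΓ : ∀ m, tΓ m = Matrix.of fun u d =>
      if h : d.1 = m then KUD m u (cast (congrArg D h) d.2)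
      else (KUS m * KSS⁻¹ * KSD d.1) u d.2)
    (Φm : ∀ m, Matrix (U m) S ℝ)
    (hΦm : ∀ m, Φm m = KUS m + KUS m * KSS⁻¹ * (KSD m * (Q m)⁻¹ * (KSD m)ᵀ)
      - KUD m * (Q m)⁻¹ * (KSD m)ᵀ)
    (ΓDD : Matrix ((m : Fin M) × D m) ((m : Fin M) × D m) ℝ)
    (hΓDD : ΓDD = KSDfᵀ * KSS⁻¹ * KSDf)
    (hGLinv : IsUnit (ΓDD + Λ).det)
    :
    ∀ m, μU m + (Φm m *ᵥ (Kdd⁻¹ *ᵥ ydd) - KUS m *ᵥ (KSS⁻¹ *ᵥ ydot m))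
        + KUD m *ᵥ ((Q m)⁻¹ *ᵥ cY m)
      = μU m + tΓ m *ᵥ ((ΓDD + Λ)⁻¹ *ᵥ (yD - μD)) := by
  intro m
  set w : S → ℝ := Kdd⁻¹ *ᵥ ydd with hw
  set vb : ∀ k, D k → ℝ := fun k => (Q k)⁻¹ *ᵥ (cY k - (KSD k)ᵀ *ᵥ w) with hvb
  set v : ((m : Fin M) × D m) → ℝ := fun d => vb d.1 d.2 with hv
  have hKddw : Kdd *ᵥ w = ydd := by
    rw [hw, mulVec_mulVec, Matrix.mul_nonsing_inv _ hKddinv, one_mulVec]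
  -- KSDf *ᵥ v = KSS *ᵥ w
  have hAv : KSDf *ᵥ v = KSS *ᵥ w := by
    rw [hKSDf, blockrow_mulVec KSD v]
    have h1 : ∀ k, KSD k *ᵥ (fun d => v ⟨k, d⟩)
        = ydot k - (KSD k * (Q k)⁻¹ * (KSD k)ᵀ) *ᵥ w := by
      intro k
      show KSD k *ᵥ ((Q k)⁻¹ *ᵥ (cY k - (KSD k)ᵀ *ᵥ w)) = _
      simp only [mulVec_sub, mulVec_mulVec, hydot, Matrix.mul_assoc]
    simp_rw [h1]
    rw [Finset.sum_sub_distrib, ← hydd, ← sum_mulVec']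
    have h2 : (∑ k, KSD k * (Q k)⁻¹ * (KSD k)ᵀ) = Kdd - KSS := by
      rw [hKdd]; abel
    rw [h2, sub_mulVec, hKddw]
    abel
  have hGv : (ΓDD + Λ) *ᵥ v = yD - μD := by
    have hΓv : ΓDD *ᵥ v = KSDfᵀ *ᵥ w := by
      rw [hΓDD, ← mulVec_mulVec, ← mulVec_mulVec, hAv,
        mulVec_mulVec w KSS⁻¹ KSS, Matrix.nonsing_inv_mul _ hKSSinv, one_mulVec]
    funext x
    obtain ⟨k, d⟩ := x
    rw [add_mulVec, Pi.add_apply, hΓv, hΛ, blockdiag_mulVec]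
    have hQv : Q k *ᵥ (fun d' => v ⟨k, d'⟩) = cY k - (KSD k)ᵀ *ᵥ w := by
      show Q k *ᵥ ((Q k)⁻¹ *ᵥ (cY k - (KSD k)ᵀ *ᵥ w)) = _
      rw [mulVec_mulVec, Matrix.mul_nonsing_inv _ (hQinv k), one_mulVec]
    rw [hQv]
    have hT : (KSDfᵀ *ᵥ w) ⟨k, d⟩ = ((KSD k)ᵀ *ᵥ w) d := by
      simp [Matrix.mulVec, dotProduct, hKSDf]
    rw [hT, Pi.sub_apply, Pi.sub_apply, hcY k d]
    ring
  have hinvv : (ΓDD + Λ)⁻¹ *ᵥ (yD - μD) = v := by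
    rw [← hGv, mulVec_mulVec, Matrix.nonsing_inv_mul _ hGLinv, one_mulVec]
  -- decompose tΓ m
  set Em : Matrix (U m) ((k : Fin M) × D k) ℝ :=
    Matrix.of (fun u d => if h : d.1 = m
      then (KUD m - KUS m * KSS⁻¹ * KSD m) u (cast (congrArg D h) d.2) else 0) with hEm
  have hrow : ∀ (X : Matrix (U m) S ℝ) (k : Fin M) (u : U m) (d : D k),
      (X * KSDf) u ⟨k, d⟩ = (X * KSD k) u d := by
    intro X k u d
    simp [Matrix.mul_apply, hKSDf]
  have htΓeq : tΓ m = KUS m * KSS⁻¹ * KSDf + Em := by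
    rw [htΓ]
    ext u x
    obtain ⟨k, d⟩ := x
    by_cases h : k = m
    · subst h
      simp [hEm, hrow, Matrix.sub_apply]
    · simp only [Matrix.of_apply, dif_neg h, Matrix.add_apply, hrow, hEm]
      ring
  have hEmv : Em *ᵥ v = (KUD m - KUS m * KSS⁻¹ * KSD m) *ᵥ vb m := by
    funext u
    simp only [Matrix.mulVec, dotProduct]
    rw [sigma_sum (fun x : (k : Fin M) × D k => Em u x * v x)]
    rw [Finset.sum_eq_single m]
    · simp [hEm, hv]
    · intro k _ hk
      apply Finset.sum_eq_zero
      intro d _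
      simp [hEm, hk]
    · simp
  have htΓv : tΓ m *ᵥ v = KUS m *ᵥ w + (KUD m - KUS m * KSS⁻¹ * KSD m) *ᵥ vb m := by
    rw [htΓeq, add_mulVec, hEmv, ← mulVec_mulVec, hAv, mulVec_mulVec,
      Matrix.mul_assoc, Matrix.nonsing_inv_mul _ hKSSinv, Matrix.mul_one]
  rw [hinvv, htΓv, hΦm, hvb]
  simp only [sub_mulVec, add_mulVec, mulVec_sub, mulVec_add, mulVec_mulVec, hydot,
    Matrix.sub_mul, Matrix.add_mul, Matrix.mul_assoc]
  abel
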